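/- Let c > 1, let a_k (k ≥ 0) be defined by a_0 = 1, a_k = (-1)^k c^k / ∏_{l=1}^k (c^l - 1), and b_k by b_0 = 1, b_k = ∏_{l=1}^k c^l/(c^l - 1). Let y_n(t) solve the ODE system ẏ_n = c^{-(n-1)} y_{n-1} - c^{-n} y_n for n ≥ 0 (with y_{-1} := 0), with initial condition y_0(0) = 1 and y_n(0) = 0 for n ≥ 1. Then y_n(t) = ∑_{k=0}^{n} a_{n-k} b_k e^{-c^{-k} t} for all n ≥ 0 and t ≥ 0. -/

import Mathlib

open Finset Real

/-- Uniqueness for the scalar linear ODE `f' = -lam * f` with `f 0 = 0`. -/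
lemma aldous_shields_decay_aux (f : ℝ → ℝ) (lam : ℝ) (h0 : f 0 = 0)
    (hf : ∀ s : ℝ, 0 ≤ s → HasDerivAt f (-lam * f s) s) :
    ∀ t : ℝ, 0 ≤ t → f t = 0 := by
  intro t ht
  set g : ℝ → ℝ := fun s => f s * Real.exp (lam * s) with hg
  have hg' : ∀ s : ℝ, 0 ≤ s → HasDerivAt g 0 s := by
    intro s hs
    have he : HasDerivAt (fun s : ℝ => Real.exp (lam * s)) (Real.exp (lam * s) * (lam * 1)) s :=
      ((hasDerivAt_id s).const_mul lam).exp
    have : HasDerivAt (fun s => f s * Real.exp (lam * s))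
        (-lam * f s * Real.exp (lam * s) + f s * (Real.exp (lam * s) * (lam * 1))) s :=
      (hf s hs).mul he
    convert this using 1
    ring
  have key : g t = g 0 := by
    apply constant_of_has_deriv_right_zero (f := g) (a := 0) (b := t)
    · intro s hs
      exact (hg' s hs.1).continuousAt.continuousWithinAt
    · intro s hs
      exact (hg' s hs.1).hasDerivWithinAt
    · exact Set.mem_Icc.2 ⟨ht, le_refl t⟩
  have : f t * Real.exp (lam * t) = 0 := by
    simpa [hg, h0] using key
  rcases mul_eq_zero.1 this with h | h
  · exact h
  · exact absurd h (Real.exp_ne_zero (lam * t))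

/-- The Toeplitz matrices built from `a` and `b` are mutually inverse:
`∑ a_{n+1-k} b_k = 0`. -/
lemma aldous_shields_Tzero_aux (c : ℝ) (hc : 1 < c) (a b : ℕ → ℝ)
    (Ra : ∀ m : ℕ, a (m+1) * (c^(m+1) - 1) = -(c * a m))
    (Rb : ∀ k : ℕ, b (k+1) * (c^(k+1) - 1) = c^(k+1) * b k) :
    ∀ n : ℕ, ∑ k ∈ Finset.range (n+2), a (n+1-k) * b k = 0 := by
  intro n
  set U : ℕ → ℝ := fun m => ∑ k ∈ Finset.range (m+1), a (m-k) * b k * c^k with hU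
  set T : ℕ → ℝ := fun m => ∑ k ∈ Finset.range (m+1), a (m-k) * b k with hT
  have L1 : U (n+1) = T (n+1) + c * U n := by
    have e1 : U (n+1) = (∑ k ∈ Finset.range (n+1), a (n-k) * b (k+1) * c^(k+1))
        + a (n+1) * b 0 := by
      simp only [hU]
      rw [Finset.sum_range_succ']
      simp only [Nat.succ_sub_succ, Nat.sub_zero, pow_zero, mul_one]
    have e2 : T (n+1) = (∑ k ∈ Finset.range (n+1), a (n-k) * b (k+1))
        + a (n+1) * b 0 := by
      simp only [hT]
      rw [Finset.sum_range_succ']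
      simp only [Nat.succ_sub_succ, Nat.sub_zero]
    have e3 : ∀ k ∈ Finset.range (n+1),
        a (n-k) * b (k+1) * c^(k+1) = a (n-k) * b (k+1) + c * (a (n-k) * b k * c^k) := by
      intro k _
      linear_combination a (n-k) * Rb k
    rw [e1, e2, Finset.sum_congr rfl e3, Finset.sum_add_distrib, ← Finset.mul_sum]
    simp only [hU]
    ring
  have L2 : c^(n+1) * T (n+1) = U (n+1) - c * U n := by
    have e1 : c^(n+1) * T (n+1) = (∑ k ∈ Finset.range (n+1), c^(n+1) * (a (n+1-k) * b k))
        + c^(n+1) * (a 0 * b (n+1)) := by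
      simp only [hT]
      rw [Finset.sum_range_succ, mul_add, Finset.mul_sum]
      simp only [Nat.sub_self]
    have e2 : U (n+1) = (∑ k ∈ Finset.range (n+1), a (n+1-k) * b k * c^k)
        + a 0 * b (n+1) * c^(n+1) := by
      simp only [hU]
      rw [Finset.sum_range_succ]
      simp only [Nat.sub_self]
    have e3 : ∀ k ∈ Finset.range (n+1), c^(n+1) * (a (n+1-k) * b k)
        = a (n+1-k) * b k * c^k - c * (a (n-k) * b k * c^k) := by
      intro k hk
      have hk' : k ≤ n := Nat.lt_succ_iff.1 (Finset.mem_range.1 hk)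
      obtain ⟨m, hm⟩ : ∃ m, n - k = m := ⟨n - k, rfl⟩
      have h1 : n + 1 - k = m + 1 := by omega
      have h2 : n + 1 = k + (m + 1) := by omega
      rw [hm, h1, h2, pow_add]
      linear_combination (c^k * b k) * Ra m
    rw [e1, e2, Finset.sum_congr rfl e3, Finset.sum_sub_distrib, ← Finset.mul_sum]
    simp only [hU]
    ring
  have key : T (n+1) * (c^(n+1) - 1) = 0 := by linear_combination L2 + L1
  have hne : c^(n+1) - 1 ≠ 0 := by
    have : 1 < c^(n+1) := one_lt_pow₀ hc (Nat.succ_ne_zero n)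
    linarith
  rcases mul_eq_zero.1 key with h | h
  · simpa [hT] using h
  · exact absurd h hne

/-- Key zpow identity for the coefficients. -/
lemma aldous_shields_zrec_aux (c : ℝ) (hc : 1 < c) (a : ℕ → ℝ) (n k : ℕ) (hk : k ≤ n)
    (Ra : ∀ m : ℕ, a (m+1) * (c^(m+1) - 1) = -(c * a m)) :
    a (n+1-k) * (-c^(-(k:ℤ))) = c^(-(n:ℤ)) * a (n-k) - c^(-((n+1:ℕ):ℤ)) * a (n+1-k) := by
  have hc0 : (0:ℝ) < c := lt_trans one_pos hc
  have hz : ∀ i : ℕ, c ^ (-(i:ℤ)) = (c^i)⁻¹ := fun i => by rw [zpow_neg, zpow_natCast]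
  obtain ⟨m, hm⟩ : ∃ m, n - k = m := ⟨n - k, rfl⟩
  have h1 : n + 1 - k = m + 1 := by omega
  have h2 : n = k + m := by omega
  rw [hm, h1, h2, hz, hz, hz]
  have hck : (c:ℝ)^k ≠ 0 := pow_ne_zero _ (ne_of_gt hc0)
  have hcm : (c:ℝ)^m ≠ 0 := pow_ne_zero _ (ne_of_gt hc0)
  have hc1 : (c:ℝ) ≠ 0 := ne_of_gt hc0
  field_simp [pow_add]
  linear_combination (-(c^m * c^k * c^k)) * Ra m

theorem aldous_shields_ode_solution (c : ℝ) (hc : 1 < c) (a b : ℕ → ℝ)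
    (ha0 : a 0 = 1)
    (ha : ∀ k : ℕ, 1 ≤ k →
      a k = (-1 : ℝ) ^ k * c ^ k / ∏ l ∈ Finset.Icc 1 k, (c ^ l - 1))
    (hb0 : b 0 = 1)
    (hb : ∀ k : ℕ, 1 ≤ k →
      b k = (∏ l ∈ Finset.Icc 1 k, c ^ l) / ∏ l ∈ Finset.Icc 1 k, (c ^ l - 1))
    (y : ℕ → ℝ → ℝ)
    (hy00 : y 0 0 = 1) (hyn0 : ∀ n : ℕ, 1 ≤ n → y n 0 = 0)
    (hode0 : ∀ t : ℝ, 0 ≤ t → HasDerivAt (y 0) (-(y 0 t)) t)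
    (hode : ∀ n : ℕ, 1 ≤ n → ∀ t : ℝ, 0 ≤ t →
      HasDerivAt (y n) (c ^ (-((n : ℤ) - 1)) * y (n - 1) t - c ^ (-(n : ℤ)) * y n t) t)
    (n : ℕ) (t : ℝ) (ht : 0 ≤ t) :
    y n t = ∑ k ∈ Finset.range (n + 1),
      a (n - k) * b k * Real.exp (-c ^ (-(k : ℤ)) * t) := by
  have hc0 : (0:ℝ) < c := lt_trans one_pos hc
  have hc1 : (c:ℝ) ≠ 0 := ne_of_gt hc0
  -- products are nonzero
  have hP : ∀ m : ℕ, (0:ℝ) < ∏ l ∈ Finset.Icc 1 m, (c ^ l - 1) := by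
    intro m
    apply Finset.prod_pos
    intro l hl
    have hl1 : 1 ≤ l := (Finset.mem_Icc.1 hl).1
    have : 1 < c ^ l := one_lt_pow₀ hc (by omega)
    linarith
  have aform : ∀ m : ℕ, a m = (-1 : ℝ) ^ m * c ^ m / ∏ l ∈ Finset.Icc 1 m, (c ^ l - 1) := by
    intro m
    rcases Nat.eq_zero_or_pos m with h | h
    · subst h; simp [ha0]
    · exact ha m h
  have bform : ∀ m : ℕ, b m = (∏ l ∈ Finset.Icc 1 m, c ^ l) / ∏ l ∈ Finset.Icc 1 m, (c ^ l - 1) := by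
    intro m
    rcases Nat.eq_zero_or_pos m with h | h
    · subst h; simp [hb0]
    · exact hb m h
  have Ra : ∀ m : ℕ, a (m+1) * (c^(m+1) - 1) = -(c * a m) := by
    intro m
    rw [aform (m+1), aform m, Finset.prod_Icc_succ_top (by omega : 1 ≤ m + 1)]
    have h1 := (hP m).ne'
    have h2 : c ^ (m+1) - 1 ≠ 0 := by
      have : 1 < c ^ (m+1) := one_lt_pow₀ hc (Nat.succ_ne_zero m)
      linarith
    field_simp
    ring
  have Rb : ∀ k : ℕ, b (k+1) * (c^(k+1) - 1) = c^(k+1) * b k := by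
    intro k
    rw [bform (k+1), bform k, Finset.prod_Icc_succ_top (by omega : 1 ≤ k + 1),
      Finset.prod_Icc_succ_top (by omega : 1 ≤ k + 1)]
    have h1 := (hP k).ne'
    have h2 : c ^ (k+1) - 1 ≠ 0 := by
      have : 1 < c ^ (k+1) := one_lt_pow₀ hc (Nat.succ_ne_zero k)
      linarith
    field_simp
  induction n generalizing t ht with
  | zero =>
      rw [Finset.sum_range_one]
      simp only [Nat.sub_zero, ha0, hb0, Nat.cast_zero, neg_zero, zpow_zero, one_mul, mul_one]
      have key : ∀ s : ℝ, 0 ≤ s → y 0 s - Real.exp (-s) = 0 := by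
        apply aldous_shields_decay_aux (lam := 1)
        · simp [hy00]
        · intro s hs
          have he : HasDerivAt (fun u : ℝ => Real.exp (-u)) (Real.exp (-s) * (-1)) s := by
            simpa using (hasDerivAt_id s).neg.exp
          have := (hode0 s hs).fun_sub he
          exact this.congr_deriv (by ring)
      have := key t ht
      have : y 0 t = Real.exp (-t) := by linarith
      rw [this]
      congr 1
      ring
  | succ n ih =>
      set S : ℝ → ℝ := fun s => ∑ k ∈ Finset.range (n+2),
        a (n+1-k) * b k * Real.exp (-c^(-(k:ℤ)) * s) with hSdef
      have hS : ∀ s : ℝ, HasDerivAt S (∑ k ∈ Finset.range (n+2),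
          a (n+1-k) * b k * (-c^(-(k:ℤ)) * Real.exp (-c^(-(k:ℤ)) * s))) s := by
        intro s
        apply HasDerivAt.fun_sum
        intro k _
        have he : HasDerivAt (fun u : ℝ => Real.exp (-c^(-(k:ℤ)) * u))
            (Real.exp (-c^(-(k:ℤ)) * s) * (-c^(-(k:ℤ)) * 1)) s :=
          ((hasDerivAt_id s).const_mul _).exp
        have := he.const_mul (a (n+1-k) * b k)
        exact this.congr_deriv (by ring)
      have hkey : ∀ s : ℝ, (∑ k ∈ Finset.range (n+2),
          a (n+1-k) * b k * (-c^(-(k:ℤ)) * Real.exp (-c^(-(k:ℤ)) * s)))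
          = c^(-(n:ℤ)) * (∑ k ∈ Finset.range (n+1),
              a (n-k) * b k * Real.exp (-c^(-(k:ℤ)) * s))
            - c^(-((n+1:ℕ):ℤ)) * S s := by
        intro s
        simp only [hSdef]
        have eL := Finset.sum_range_succ
          (fun k => a (n+1-k) * b k * (-c^(-(k:ℤ)) * Real.exp (-c^(-(k:ℤ)) * s))) (n+1)
        have eN := Finset.sum_range_succ
          (fun k => a (n+1-k) * b k * Real.exp (-c^(-(k:ℤ)) * s)) (n+1)
        rw [eL, eN]
        have hterm : ∀ k ∈ Finset.range (n+1),
            a (n+1-k) * b k * (-c^(-(k:ℤ)) * Real.exp (-c^(-(k:ℤ)) * s))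
            = c^(-(n:ℤ)) * (a (n-k) * b k * Real.exp (-c^(-(k:ℤ)) * s))
              - c^(-((n+1:ℕ):ℤ)) * (a (n+1-k) * b k * Real.exp (-c^(-(k:ℤ)) * s)) := by
          intro k hk
          have hk' : k ≤ n := Nat.lt_succ_iff.1 (Finset.mem_range.1 hk)
          have hz := aldous_shields_zrec_aux c hc a n k hk' Ra
          linear_combination (b k * Real.exp (-c^(-(k:ℤ)) * s)) * hz
        rw [Finset.sum_congr rfl hterm, Finset.sum_sub_distrib, ← Finset.mul_sum, ← Finset.mul_sum]
        ring
      have hzero : ∀ s : ℝ, 0 ≤ s → y (n+1) s - S s = 0 := by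
        apply aldous_shields_decay_aux (lam := c^(-((n+1:ℕ):ℤ)))
        · have hS0 : S 0 = ∑ k ∈ Finset.range (n+2), a (n+1-k) * b k := by
            simp only [hSdef]
            apply Finset.sum_congr rfl
            intro k _
            simp
          rw [hyn0 (n+1) (by omega), hS0,
            aldous_shields_Tzero_aux c hc a b Ra Rb n]
          ring
        · intro s hs
          have hd := hode (n+1) (by omega) s hs
          have hcast : (-((((n+1:ℕ)):ℤ) - 1)) = -(n:ℤ) := by push_cast; ring
          rw [hcast, Nat.add_sub_cancel] at hd
          rw [ih s hs] at hd
          have := hd.fun_sub ((hS s).congr_deriv (hkey s))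
          exact this.congr_deriv (by ring)
      have := hzero t ht
      have hyt : y (n+1) t = S t := by linarith
      rw [hyt]
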